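/- (q-Chu-Vandermonde) For integers 0 ≤ t ≤ n, any commutative ring R, any element ζ ∈ R, and any polynomial P ∈ R[x], one has ∑_{m=0}^{n} ζ^m P(m) binom(n,m)_q = ∑_{m=0}^{n-t} ∑_{j=0}^{t} ζ^m ζ^{t-j} P(m+t-j) q^{jm} binom(t,j)_q binom(n-t,m)_q in R[q]. -/
import Mathlib


open Polynomial Finset

/-- The Gaussian (q-)binomial coefficient as a polynomial, satisfying the
product formula `∏_{i=n-m+1}^{n}(1-q^i) / ∏_{i=1}^{m}(1-q^i)`. -/
noncomputable def qbinom (R : Type*) [CommRing R] : ℕ → ℕ → Polynomial R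
  | _, 0 => 1
  | 0, _+1 => 0
  | n+1, m+1 => qbinom R n (m+1) + X ^ (n - m) * qbinom R n m

section Aux
variable (R : Type*) [CommRing R]

lemma qbinom_zero (n : ℕ) : qbinom R n 0 = 1 := by cases n <;> rfl

lemma qbinom_succ_succ (n m : ℕ) :
    qbinom R (n+1) (m+1) = qbinom R n (m+1) + X ^ (n - m) * qbinom R n m := rfl

lemma qbinom_eq_zero : ∀ n m : ℕ, n < m → qbinom R n m = 0
  | 0, _+1, _ => rfl
  | n+1, m+1, h => by
    rw [qbinom_succ_succ, qbinom_eq_zero n (m+1) (by omega),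
      qbinom_eq_zero n m (by omega)]
    ring

lemma qbinom_cross : ∀ n m : ℕ,
    (1 - X ^ (m+1)) * qbinom R n (m+1) = (1 - X ^ (n - m)) * qbinom R n m
  | 0, 0 => by simp [qbinom]
  | 0, m+1 => by simp [qbinom_eq_zero R 0 (m+1) (by omega), qbinom_eq_zero R 0 (m+2) (by omega)]
  | n+1, 0 => by
    have h := qbinom_cross n 0
    rw [qbinom_succ_succ]
    simp only [Nat.sub_zero, qbinom_zero, zero_add, pow_one, mul_one] at h ⊢
    linear_combination h
  | n+1, k+1 => by
    rcases le_or_gt (k+1) n with hk | hk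
    · obtain ⟨d, rfl⟩ : ∃ d, n = k+1+d := ⟨n-(k+1), by omega⟩
      have h1 := qbinom_cross (k+1+d) (k+1)
      have h2 := qbinom_cross (k+1+d) k
      rw [qbinom_succ_succ, qbinom_succ_succ]
      simp only [show k+1+d-(k+1) = d by omega, show k+1+d-k = d+1 by omega,
        show k+1+d+1-(k+1) = d+1 by omega] at h1 h2 ⊢
      linear_combination h1 + X^(d+1) * h2
    · rw [qbinom_eq_zero R (n+1) (k+2) (by omega), show n+1-(k+1) = 0 by omega]
      simp

lemma qbinom_dual (n m : ℕ) :
    qbinom R (n+1) (m+1) = X ^ (m+1) * qbinom R n (m+1) + qbinom R n m := by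
  have h := qbinom_cross R n m
  rw [qbinom_succ_succ]
  linear_combination h

lemma qbinom_key (t : ℕ) : ∀ n m : ℕ, t ≤ n → m ≤ n →
    qbinom R n m = ∑ j ∈ range (t+1), ∑ m' ∈ range (n-t+1),
      if m' + t = m + j then X ^ (j*m') * qbinom R t j * qbinom R (n-t) m' else 0 := by
  induction t with
  | zero =>
    intro n m _ hm
    simp only [Nat.sub_zero, zero_add, range_one, sum_singleton, add_zero, Nat.zero_mul,
      pow_zero, qbinom_zero, one_mul]
    rw [Finset.sum_ite_eq' (range (n+1)) m (fun m' => qbinom R n m')]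
    simp [Nat.lt_succ_iff, hm]
  | succ t IH =>
    intro n m ht hm
    obtain ⟨a, rfl⟩ : ∃ a, n = t + 1 + a := ⟨n - (t+1), by omega⟩
    rw [IH (t+1+a) m (by omega) hm]
    simp only [show t+1+a-t = a+1 by omega, show t+1+a-(t+1) = a by omega]
    -- goal : S t = S (t+1)
    trans (∑ j ∈ range (t+1), ∑ m' ∈ range (a+1),
          ((if m'+t+1 = m+j then (X:Polynomial R) ^ (j*m'+j) else 0) * (qbinom R t j * qbinom R a m')
            + (if m'+t = m+j then (X:Polynomial R) ^ (j*m'+m') else 0) * (qbinom R t j * qbinom R a m')))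
    · -- S t = G
      apply Finset.sum_congr rfl
      intro j hj
      rw [Finset.sum_range_succ']
      have h1 : ∀ m' ∈ range (a+1),
          (if m'+1+t = m+j then X ^ (j*(m'+1)) * qbinom R t j * qbinom R (a+1) (m'+1) else 0)
          = (if m'+t+1 = m+j then (X:Polynomial R) ^ (j*m'+j) else 0) * (qbinom R t j * qbinom R a m')
            + (if m'+t+1 = m+j then X ^ (j*(m'+1)+(m'+1)) * (qbinom R t j * qbinom R a (m'+1)) else 0) := by
        intro m' _
        rw [if_congr (show m'+1+t = m+j ↔ m'+t+1 = m+j by omega) rfl rfl, qbinom_dual]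
        by_cases hc : m'+t+1 = m+j <;> simp only [if_pos, if_neg, hc, if_true, if_false] <;> ring
      rw [Finset.sum_congr rfl h1, Finset.sum_add_distrib, Finset.sum_add_distrib, add_assoc]
      congr 1
      conv_rhs => rw [Finset.sum_range_succ']
      congr 1
      · rw [Finset.sum_range_succ]
        rw [show (if a+t+1 = m+j then X ^ (j*(a+1)+(a+1)) * (qbinom R t j * qbinom R a (a+1)) else 0) = 0 by
          simp [qbinom_eq_zero R a (a+1) (by omega)]]
        rw [add_zero]
        apply Finset.sum_congr rfl
        intro m' _
        rw [if_congr (show m'+t+1 = m+j ↔ m'+1+t = m+j by omega) rfl rfl]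
        by_cases hc : m'+1+t = m+j <;> simp only [if_pos, if_neg, hc, if_true, if_false] <;> ring
      · by_cases hc : 0+t = m+j <;> simp only [if_pos, if_neg, hc, if_true, if_false] <;>
          simp [qbinom_zero]
    · -- G = S (t+1)
      symm
      rw [Finset.sum_range_succ']
      have h2 : ∀ j ∈ range (t+1),
          (∑ m' ∈ range (a+1), if m'+(t+1) = m+(j+1) then
              X ^ ((j+1)*m') * qbinom R (t+1) (j+1) * qbinom R a m' else 0)
          = (∑ m' ∈ range (a+1),
              (if m'+t = m+j then X ^ ((j+1)*m'+(j+1)) * (qbinom R t (j+1) * qbinom R a m') else 0))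
            + (∑ m' ∈ range (a+1),
              (if m'+t = m+j then (X:Polynomial R) ^ (j*m'+m') else 0) * (qbinom R t j * qbinom R a m')) := by
        intro j hj
        rw [← Finset.sum_add_distrib]
        apply Finset.sum_congr rfl
        intro m' _
        rw [if_congr (show m'+(t+1) = m+(j+1) ↔ m'+t = m+j by omega) rfl rfl, qbinom_dual]
        by_cases hc : m'+t = m+j <;> simp only [if_pos, if_neg, hc, if_true, if_false] <;> ring
      rw [Finset.sum_congr rfl h2, Finset.sum_add_distrib]
      simp only [Finset.sum_add_distrib]
      rw [add_right_comm]
      congr 1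
      conv_rhs => rw [Finset.sum_range_succ']
      congr 1
      · rw [Finset.sum_range_succ]
        rw [show (∑ m' ∈ range (a+1),
            if m'+t = m+t then X ^ ((t+1)*m'+(t+1)) * (qbinom R t (t+1) * qbinom R a m') else 0) = 0 by
          simp [qbinom_eq_zero R t (t+1) (by omega)]]
        rw [add_zero]
        apply Finset.sum_congr rfl
        intro j _
        apply Finset.sum_congr rfl
        intro m' _
        rw [if_congr (show m'+t+1 = m+(j+1) ↔ m'+t = m+j by omega) rfl rfl]
        by_cases hc : m'+t = m+j <;> simp only [if_pos, if_neg, hc, if_true, if_false] <;> ring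
      · apply Finset.sum_congr rfl
        intro m' _
        rw [if_congr (show m'+(t+1) = m+0 ↔ m'+t+1 = m+0 by omega) rfl rfl]
        by_cases hc : m'+t+1 = m+0 <;> simp only [if_pos, if_neg, hc, if_true, if_false] <;>
          simp [qbinom_zero]
end Aux

/-- A q-analog of the Chu–Vandermonde identity. -/
theorem q_chu_vandermonde {R : Type*} [CommRing R] (ζ : R) (P : Polynomial R)
    (t n : ℕ) (ht : t ≤ n) :
    ∑ m ∈ Finset.range (n + 1), C (ζ ^ m * P.eval (m : R)) * qbinom R n m =
      ∑ m ∈ Finset.range (n - t + 1), ∑ j ∈ Finset.range (t + 1),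
        C (ζ ^ m * ζ ^ (t - j) * P.eval ((m + (t - j) : ℕ) : R)) * X ^ (j * m) *
          qbinom R t j * qbinom R (n - t) m := by
  have h0 : ∀ m ∈ range (n+1), C (ζ ^ m * P.eval (m:R)) * qbinom R n m
      = ∑ j ∈ range (t+1), ∑ m' ∈ range (n-t+1),
          if m' + t = m + j then
            C (ζ ^ m * P.eval (m:R)) * (X ^ (j*m') * qbinom R t j * qbinom R (n-t) m') else 0 := by
    intro m hm
    rw [qbinom_key R t n m ht (by simpa [Nat.lt_succ_iff] using hm), Finset.mul_sum]
    refine Finset.sum_congr rfl fun j _ => ?_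
    rw [Finset.mul_sum]
    exact Finset.sum_congr rfl fun m' _ => by rw [mul_ite, mul_zero]
  rw [Finset.sum_congr rfl h0]
  rw [Finset.sum_comm]
  conv_rhs => rw [Finset.sum_comm]
  refine Finset.sum_congr rfl fun j hj => ?_
  rw [Finset.sum_comm]
  refine Finset.sum_congr rfl fun m' hm' => ?_
  have hj' : j ≤ t := by simpa [Nat.lt_succ_iff] using hj
  have hm'' : m' ≤ n - t := by simpa [Nat.lt_succ_iff] using hm'
  rw [Finset.sum_congr rfl
    (fun m _ => if_congr (show m'+t = m+j ↔ m'+(t-j) = m by omega) rfl rfl)]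
  rw [Finset.sum_ite_eq (range (n+1)) (m'+(t-j))]
  rw [if_pos (by rw [mem_range]; omega)]
  rw [pow_add]
  ring
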